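/- arXiv:0802.2544 — 2 statements merged into one kernel-verified Lean document; each statement's English description precedes it below -/
import Mathlib

section
/- For every t ∈ ℝ and all x,y,z ∈ ℝ, the trace of the fourth power of J_{μ_t}(x·e₇ + y·e₈ + z·e₉) equals tr(J_{μ_t}(w)⁴) = 2(1+t⁴)(x⁴+y⁴+z⁴) + 8t²(x²y² + y²z² + z²x²). -/
open Matrix Finset Real Filter

noncomputable section

/-- The canonical basis vector `eᵢ` of `ℝ⁹` (0-indexed: `e 0 = e₁`, …, `e 8 = e₉`). -/
def e (i : Fin 9) : Fin 9 → ℝ := Pi.single i 1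

/-- Half of the structure constants of `μ_t` (before antisymmetrization):
`μ_t(e₅,e₄)=e₇, μ_t(e₁,e₆)=e₈, μ_t(e₃,e₂)=e₉, μ_t(e₃,e₆)=t e₇, μ_t(e₅,e₂)=t e₈, μ_t(e₁,e₄)=t e₉`. -/
def muHalf (t : ℝ) (i j k : Fin 9) : ℝ :=
  (if i = 4 ∧ j = 3 ∧ k = 6 then (1:ℝ) else 0) +
  (if i = 0 ∧ j = 5 ∧ k = 7 then (1:ℝ) else 0) +
  (if i = 2 ∧ j = 1 ∧ k = 8 then (1:ℝ) else 0) +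
  (if i = 2 ∧ j = 5 ∧ k = 6 then t else 0) +
  (if i = 4 ∧ j = 1 ∧ k = 7 then t else 0) +
  (if i = 0 ∧ j = 3 ∧ k = 8 then t else 0)

/-- The (antisymmetric) structure constants of `μ_t`. -/
def muC (t : ℝ) (i j k : Fin 9) : ℝ := muHalf t i j k - muHalf t j i k

/-- The two-step nilpotent Lie bracket `μ_t` on `ℝ⁹`. -/
def mu (t : ℝ) (X Y : Fin 9 → ℝ) : Fin 9 → ℝ :=
  fun k => ∑ i, ∑ j, X i * Y j * muC t i j k

/-- Structure constants of `μ̃_t`: those of `μ_t` plus `μ̃_t(e₁,e₂)=e₇`. -/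
def muTildeHalf (t : ℝ) (i j k : Fin 9) : ℝ :=
  muHalf t i j k + (if i = 0 ∧ j = 1 ∧ k = 6 then (1:ℝ) else 0)

def muTildeC (t : ℝ) (i j k : Fin 9) : ℝ := muTildeHalf t i j k - muTildeHalf t j i k

/-- The two-step nilpotent Lie bracket `μ̃_t` on `ℝ⁹`. -/
def muTilde (t : ℝ) (X Y : Fin 9 → ℝ) : Fin 9 → ℝ :=
  fun k => ∑ i, ∑ j, X i * Y j * muTildeC t i j k

/-- Structure constants of `μ̄_t`: those of `μ̃_t` plus `μ̄_t(e₃,e₄)=e₈`. -/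
def muBarHalf (t : ℝ) (i j k : Fin 9) : ℝ :=
  muTildeHalf t i j k + (if i = 2 ∧ j = 3 ∧ k = 7 then (1:ℝ) else 0)

def muBarC (t : ℝ) (i j k : Fin 9) : ℝ := muBarHalf t i j k - muBarHalf t j i k

/-- The two-step nilpotent Lie bracket `μ̄_t` on `ℝ⁹`. -/
def muBar (t : ℝ) (X Y : Fin 9 → ℝ) : Fin 9 → ℝ :=
  fun k => ∑ i, ∑ j, X i * Y j * muBarC t i j k

/-- The space of (skew-symmetric bilinear) bracket candidates on `ℝ⁹`,
represented as bare functions. -/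
abbrev NilBracket := (Fin 9 → ℝ) → (Fin 9 → ℝ) → Fin 9 → ℝ

/-- The Ricci operator of `(ℝ⁹, ν)` w.r.t. the canonical inner product, as a matrix in the
canonical basis:
`⟨Ric_ν X, Y⟩ = -(1/2)∑ᵢⱼ⟨ν(X,eᵢ),eⱼ⟩⟨ν(Y,eᵢ),eⱼ⟩ + (1/4)∑ᵢⱼ⟨ν(eᵢ,eⱼ),X⟩⟨ν(eᵢ,eⱼ),Y⟩`. -/
def ric (ν : NilBracket) : Matrix (Fin 9) (Fin 9) ℝ :=
  fun a b =>
    -(1/2) * (∑ i, ∑ j, ν (e a) (e i) j * ν (e b) (e i) j)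
    + (1/4) * (∑ i, ∑ j, ν (e i) (e j) a * ν (e i) (e j) b)

/-- `D` is a derivation of the algebra `(ℝ⁹, ν)`. -/
def IsDerivation (ν : NilBracket) (D : Matrix (Fin 9) (Fin 9) ℝ) : Prop :=
  ∀ X Y : Fin 9 → ℝ, D.mulVec (ν X Y) = ν (D.mulVec X) Y + ν X (D.mulVec Y)

/-- The basis `e₁,…,e₆` of `v = span(e₁,…,e₆) ⊆ ℝ⁹`, indexed by `Fin 6`. -/
def E (a : Fin 6) : Fin 9 → ℝ := e (Fin.castLE (by norm_num) a)

/-- The skew-symmetric 6×6 matrix `J_ν(w)`, `w = x e₇ + y e₈ + z e₉`, defined by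
`⟨J_ν(w) v₁, v₂⟩ = ⟨ν(v₁,v₂), w⟩` for `v₁,v₂ ∈ span(e₁,…,e₆)`. -/
def Jmat (ν : NilBracket) (x y z : ℝ) : Matrix (Fin 6) (Fin 6) ℝ :=
  fun a b => ν (E b) (E a) 6 * x + ν (E b) (E a) 7 * y + ν (E b) (E a) 8 * z

/-- The `GL₉(ℝ)` action on brackets: `(g·ν)(X,Y) = g ν(g⁻¹X, g⁻¹Y)`. -/
def act (g : Matrix (Fin 9) (Fin 9) ℝ) (ν : NilBracket) : NilBracket :=
  fun X Y => g.mulVec (ν (g⁻¹.mulVec X) (g⁻¹.mulVec Y))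

/-- The algebras `(ℝ⁹, ν)` and `(ℝ⁹, ν')` are isomorphic:
there is `g ∈ GL₉(ℝ)` with `g ν(X,Y) = ν'(gX, gY)` for all `X, Y`. -/
def LieIso (ν ν' : NilBracket) : Prop :=
  ∃ g : Matrix (Fin 9) (Fin 9) ℝ, IsUnit g ∧
    ∀ X Y : Fin 9 → ℝ, g.mulVec (ν X Y) = ν' (g.mulVec X) (g.mulVec Y)

lemma mu_e (t : ℝ) (i j k : Fin 9) : mu t (e i) (e j) k = muC t i j k := by
  simp [mu, e, Pi.single_apply, ite_mul, zero_mul, one_mul]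

set_option maxHeartbeats 1000000 in
lemma Jmat_mu (t x y z : ℝ) :
    Jmat (mu t) x y z =
      !![0,0,0,-t*z,0,-y;
         0,0,z,0,t*y,0;
         0,-z,0,0,0,-t*x;
         t*z,0,0,0,x,0;
         0,-t*y,0,-x,0,0;
         y,0,t*x,0,0,0] := by
  ext a b
  fin_cases a <;> fin_cases b <;>
    · simp only [Jmat, E, mu_e]
      simp (config := { decide := true }) only [muC, muHalf, if_true, if_false, and_true, true_and, and_false, false_and, if_neg, if_pos]
      norm_num

/-- `tr(J_{μ_t}(x e₇+y e₈+z e₉)⁴) = 2(1+t⁴)(x⁴+y⁴+z⁴) + 8t²(x²y²+y²z²+z²x²)`. -/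
theorem statement4 (t x y z : ℝ) :
    Matrix.trace ((Jmat (mu t) x y z)^4)
      = 2*(1+t^4)*(x^4+y^4+z^4) + 8*t^2*(x^2*y^2 + y^2*z^2 + z^2*x^2) := by
  rw [Jmat_mu]
  simp [Matrix.trace, pow_succ, Matrix.mul_apply, Fin.sum_univ_succ]
  ring
end
end

section
/- Let A = diag(0,-2,0,-2,3,1,1,1,-2) and for s ∈ ℝ let ψ_s = exp(-sA) ∈ GL₉(ℝ) (a diagonal matrix with entries e^{0}, e^{2s}, e^{0}, e^{2s}, e^{-3s}, e^{-s}, e^{-s}, e^{-s}, e^{2s}). Then for every t ∈ ℝ, the brackets ψ_s·μ̄_t converge to μ_t as s → ∞ (convergence in the finite-dimensional space of skew-symmetric bilinear maps ℝ⁹×ℝ⁹→ℝ⁹); in particular μ_t lies in the closure of the GL₉(ℝ)-orbit of μ̄_t under the action (g·μ)(X,Y) = g μ(g⁻¹X, g⁻¹Y). -/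
open Matrix Finset Real Filter

noncomputable section

/-- `ψ_s = exp(-sA)` for `A = diag(0,-2,0,-2,3,1,1,1,-2)`. -/
def psi (s : ℝ) : Matrix (Fin 9) (Fin 9) ℝ :=
  Matrix.diagonal ![1, Real.exp (2*s), 1, Real.exp (2*s), Real.exp (-(3*s)),
    Real.exp (-s), Real.exp (-s), Real.exp (-s), Real.exp (2*s)]


set_option maxRecDepth 10000
set_option maxHeartbeats 2000000

lemma sum9 (f : Fin 9 → ℝ) :
    ∑ i, f i = f 0 + f 1 + f 2 + f 3 + f 4 + f 5 + f 6 + f 7 + f 8 := by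
  rw [Fin.sum_univ_castSucc, Fin.sum_univ_eight]; rfl

lemma prod9 (f : Fin 9 → ℝ) :
    ∏ i, f i = f 0 * f 1 * f 2 * f 3 * f 4 * f 5 * f 6 * f 7 * f 8 := by
  rw [Fin.prod_univ_castSucc, Fin.prod_univ_eight]; rfl

lemma fin4 : (4:Fin 9) = (0:Fin 5).succ.succ.succ.succ := rfl
lemma fin5 : (5:Fin 9) = (0:Fin 4).succ.succ.succ.succ.succ := rfl
lemma fin6 : (6:Fin 9) = (0:Fin 3).succ.succ.succ.succ.succ.succ := rfl
lemma fin7 : (7:Fin 9) = (0:Fin 2).succ.succ.succ.succ.succ.succ.succ := rfl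
lemma fin8 : (8:Fin 9) = (0:Fin 1).succ.succ.succ.succ.succ.succ.succ.succ := rfl

def psiInv (s : ℝ) : Matrix (Fin 9) (Fin 9) ℝ :=
  Matrix.diagonal ![1, Real.exp (-(2*s)), 1, Real.exp (-(2*s)), Real.exp (3*s),
    Real.exp s, Real.exp s, Real.exp s, Real.exp (-(2*s))]

lemma psi_mul (s : ℝ) : psi s * psiInv s = 1 := by
  rw [psi, psiInv, Matrix.diagonal_mul_diagonal,
    show (1 : Matrix (Fin 9) (Fin 9) ℝ) = Matrix.diagonal 1 from Matrix.diagonal_one.symm]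
  refine congrArg Matrix.diagonal (funext fun i => ?_)
  fin_cases i <;>
    simp [Pi.mul_apply, fin4, fin5, fin6, fin7, fin8, Matrix.cons_val_succ, ← Real.exp_add]

lemma psi_inv (s : ℝ) : (psi s)⁻¹ = psiInv s :=
  Matrix.inv_eq_right_inv (psi_mul s)

lemma isUnit_psi (s : ℝ) : IsUnit (psi s) :=
  ⟨⟨psi s, psiInv s, psi_mul s, mul_eq_one_comm.mp (psi_mul s)⟩, rfl⟩

def extC (i j k : Fin 9) : ℝ :=
  (if i = 0 ∧ j = 1 ∧ k = 6 then (1:ℝ) else 0) - (if i = 1 ∧ j = 0 ∧ k = 6 then (1:ℝ) else 0)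
  + (if i = 2 ∧ j = 3 ∧ k = 7 then (1:ℝ) else 0) - (if i = 3 ∧ j = 2 ∧ k = 7 then (1:ℝ) else 0)

def dvec (s : ℝ) : Fin 9 → ℝ :=
  ![1, Real.exp (2*s), 1, Real.exp (2*s), Real.exp (-(3*s)),
    Real.exp (-s), Real.exp (-s), Real.exp (-s), Real.exp (2*s)]

def divec (s : ℝ) : Fin 9 → ℝ :=
  ![1, Real.exp (-(2*s)), 1, Real.exp (-(2*s)), Real.exp (3*s),
    Real.exp s, Real.exp s, Real.exp s, Real.exp (-(2*s))]

lemma psi_eq (s : ℝ) : psi s = Matrix.diagonal (dvec s) := rfl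
lemma psiInv_eq (s : ℝ) : psiInv s = Matrix.diagonal (divec s) := rfl

lemma coeff (t s : ℝ) (i j k : Fin 9) :
    dvec s k * (divec s i * divec s j * muBarC t i j k)
      = muC t i j k + Real.exp (-(3*s)) * extC i j k := by
  fin_cases i <;> fin_cases j <;>
    simp (config := { decide := true }) only [dvec, divec, extC, muBarC, muC,
      muBarHalf, muTildeHalf, muHalf,
      fin4, fin5, fin6, fin7, fin8, Matrix.cons_val_succ,
      Matrix.cons_val_zero, Matrix.cons_val_one, Matrix.head_cons,
      true_and, and_true, false_and, and_false, if_true, if_false,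
      ite_true, ite_false, mul_zero, zero_mul, mul_one, one_mul,
      sub_zero, zero_sub, add_zero, zero_add, neg_zero, sub_self] <;>
    (try split_ifs with h) <;>
    (try subst h) <;>
    norm_num [fin4, fin5, fin6, fin7, fin8, Matrix.cons_val_succ, Matrix.cons_val_two, Matrix.vecHead, Matrix.vecTail, ← Real.exp_add] <;>
    (try rw [← mul_assoc, ← Real.exp_add]) <;> (try ring_nf) <;> (try norm_num) <;>
    (try ring)

lemma extsum (X Y : Fin 9 → ℝ) (k : Fin 9) :
    ∑ i, ∑ j, X i * Y j * extC i j k =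
      (X 0 * Y 1 - X 1 * Y 0) * (if k = 6 then 1 else 0) +
      (X 2 * Y 3 - X 3 * Y 2) * (if k = 7 then 1 else 0) := by
  simp (config := { decide := true }) only [sum9, extC,
    true_and, and_true, false_and, and_false, if_true, if_false,
    ite_true, ite_false, mul_zero, zero_mul, mul_one, one_mul,
    sub_zero, zero_sub, add_zero, zero_add, neg_zero, sub_self]
  split_ifs <;> ring

lemma key (t s : ℝ) : act (psi s) (muBar t) = fun X Y k =>
    mu t X Y k + Real.exp (-(3*s)) *
      ((X 0 * Y 1 - X 1 * Y 0) * (if k = 6 then 1 else 0) +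
       (X 2 * Y 3 - X 3 * Y 2) * (if k = 7 then 1 else 0)) := by
  funext X Y k
  simp only [act, psi_inv]
  simp only [psi_eq, psiInv_eq, Matrix.mulVec_diagonal, muBar]
  calc dvec s k * ∑ i, ∑ j, divec s i * X i * (divec s j * Y j) * muBarC t i j k
      = ∑ i, ∑ j, (X i * Y j * muC t i j k
          + Real.exp (-(3*s)) * (X i * Y j * extC i j k)) := by
        rw [Finset.mul_sum]
        refine Finset.sum_congr rfl fun i _ => ?_
        rw [Finset.mul_sum]
        refine Finset.sum_congr rfl fun j _ => ?_
        have h := coeff t s i j k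
        calc dvec s k * (divec s i * X i * (divec s j * Y j) * muBarC t i j k)
            = X i * Y j * (dvec s k * (divec s i * divec s j * muBarC t i j k)) := by
              ring
          _ = X i * Y j * (muC t i j k + Real.exp (-(3*s)) * extC i j k) := by rw [h]
          _ = _ := by ring
    _ = (∑ i, ∑ j, X i * Y j * muC t i j k)
          + Real.exp (-(3*s)) * ∑ i, ∑ j, X i * Y j * extC i j k := by
        rw [Finset.mul_sum]
        rw [← Finset.sum_add_distrib]
        refine Finset.sum_congr rfl fun i _ => ?_
        rw [Finset.mul_sum, ← Finset.sum_add_distrib]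
    _ = _ := by rw [extsum]; rfl

/-- `ψ_s·μ̄_t → μ_t` as `s → ∞`; in particular `μ_t` lies in the closure of
the `GL₉(ℝ)`-orbit of `μ̄_t`. -/
theorem statement18 (t : ℝ) :
    Tendsto (fun s : ℝ => act (psi s) (muBar t)) atTop (nhds (mu t)) ∧
    mu t ∈ closure {ν : NilBracket |
      ∃ g : Matrix (Fin 9) (Fin 9) ℝ, IsUnit g ∧ ν = act g (muBar t)} := by
  have hexp : Tendsto (fun s : ℝ => Real.exp (-(3*s))) atTop (nhds 0) := by
    rw [Real.tendsto_exp_comp_nhds_zero]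
    exact (tendsto_neg_atBot_iff.2 (tendsto_id.const_mul_atTop (by norm_num : (0:ℝ) < 3)))
  have h1 : Tendsto (fun s : ℝ => act (psi s) (muBar t)) atTop (nhds (mu t)) := by
    rw [tendsto_pi_nhds]; intro X
    rw [tendsto_pi_nhds]; intro Y
    rw [tendsto_pi_nhds]; intro k
    simp only [key]
    have := (hexp.mul_const ((X 0 * Y 1 - X 1 * Y 0) * (if k = 6 then 1 else 0) +
       (X 2 * Y 3 - X 3 * Y 2) * (if k = 7 then 1 else 0))).const_add (mu t X Y k)
    simpa using this
  exact ⟨h1, mem_closure_of_tendsto h1 (Filter.Eventually.of_forall fun s =>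
    ⟨psi s, isUnit_psi s, rfl⟩)⟩
end
end
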